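/- Let I ⊆ ℝ be a compact interval of positive length, and let N ⊆ I be a Lebesgue-measurable set with 0 < μ(N) < μ(I), where μ denotes Lebesgue measure. Let I₁, …, I_m be finitely many open intervals of ℝ whose union contains I. Then there exists an index k such that 0 < μ(N ∩ I_k) < μ(I ∩ I_k). -/

import Mathlib

open MeasureTheory

/-- **Measure-theoretic covering lemma.** Let `I = [a,b]` be a compact interval of
positive length and `N ⊆ I` measurable with `0 < μ N < μ I`. If finitely many open
intervals `(c k, d k)`, `k : Fin m`, cover `I`, then some `k` satisfies
`0 < μ (N ∩ (c k, d k)) < μ (I ∩ (c k, d k))`. -/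
theorem exists_interval_partial_measure
    (a b : ℝ) (hab : a < b)
    (N : Set ℝ) (hN_sub : N ⊆ Set.Icc a b) (hN_meas : MeasurableSet N)
    (hN_pos : 0 < volume N) (hN_lt : volume N < volume (Set.Icc a b))
    (m : ℕ) (c d : Fin m → ℝ)
    (hcov : Set.Icc a b ⊆ ⋃ k, Set.Ioo (c k) (d k)) :
    ∃ k : Fin m, 0 < volume (N ∩ Set.Ioo (c k) (d k)) ∧
      volume (N ∩ Set.Ioo (c k) (d k)) < volume (Set.Icc a b ∩ Set.Ioo (c k) (d k)) := by
  by_contra hcon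
  push_neg at hcon
  have hIfin : volume (Set.Icc a b) ≠ ⊤ := by
    simp [Real.volume_Icc]
  -- dichotomy: every interval is N-null or complement-null
  have hdich : ∀ k : Fin m, volume (N ∩ Set.Ioo (c k) (d k)) = 0 ∨
      volume ((Set.Icc a b \ N) ∩ Set.Ioo (c k) (d k)) = 0 := by
    intro k
    rcases eq_or_ne (volume (N ∩ Set.Ioo (c k) (d k))) 0 with h0 | h0
    · exact Or.inl h0
    right
    have hle := hcon k (zero_lt_iff.mpr h0)
    have hsplit : Set.Icc a b ∩ Set.Ioo (c k) (d k)
        = (N ∩ Set.Ioo (c k) (d k)) ∪ ((Set.Icc a b \ N) ∩ Set.Ioo (c k) (d k)) := by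
      rw [← Set.union_inter_distrib_right, Set.union_diff_cancel hN_sub]
    have hdisj : Disjoint (N ∩ Set.Ioo (c k) (d k))
        ((Set.Icc a b \ N) ∩ Set.Ioo (c k) (d k)) :=
      (Set.disjoint_sdiff_right).mono Set.inter_subset_left Set.inter_subset_left
    have hmeas : MeasurableSet ((Set.Icc a b \ N) ∩ Set.Ioo (c k) (d k)) :=
      ((measurableSet_Icc.diff hN_meas).inter measurableSet_Ioo)
    rw [hsplit, measure_union hdisj hmeas] at hle
    have hfin : volume (N ∩ Set.Ioo (c k) (d k)) ≠ ⊤ :=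
      ne_top_of_le_ne_top hIfin (measure_mono (Set.inter_subset_left.trans hN_sub))
    have hle' : volume (N ∩ Set.Ioo (c k) (d k))
        + volume ((Set.Icc a b \ N) ∩ Set.Ioo (c k) (d k))
        ≤ volume (N ∩ Set.Ioo (c k) (d k)) + 0 := by rw [add_zero]; exact hle
    have := (ENNReal.add_le_add_iff_left hfin).mp hle'
    exact le_antisymm this zero_le
  -- the two open sets
  set U : Set ℝ := ⋃ k, ⋃ _ : volume (N ∩ Set.Ioo (c k) (d k)) = 0,
      Set.Ioo (c k) (d k) with hU
  set V : Set ℝ := ⋃ k, ⋃ _ : volume ((Set.Icc a b \ N) ∩ Set.Ioo (c k) (d k)) = 0,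
      Set.Ioo (c k) (d k) with hV
  have hUopen : IsOpen U := isOpen_iUnion fun k => isOpen_iUnion fun _ => isOpen_Ioo
  have hVopen : IsOpen V := isOpen_iUnion fun k => isOpen_iUnion fun _ => isOpen_Ioo
  have hsubUV : Set.Icc a b ⊆ U ∪ V := by
    intro x hx
    obtain ⟨s, ⟨k, rfl⟩, hxs⟩ := hcov hx
    rcases hdich k with h | h
    · exact Or.inl (Set.mem_iUnion.2 ⟨k, Set.mem_iUnion.2 ⟨h, hxs⟩⟩)
    · exact Or.inr (Set.mem_iUnion.2 ⟨k, Set.mem_iUnion.2 ⟨h, hxs⟩⟩)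
  -- N ∩ U is null
  have hNU : volume (N ∩ U) = 0 := by
    have : N ∩ U ⊆ ⋃ k, ⋃ _ : volume (N ∩ Set.Ioo (c k) (d k)) = 0,
        (N ∩ Set.Ioo (c k) (d k)) := by
      rintro x ⟨hxN, hxU⟩
      obtain ⟨s, ⟨k, rfl⟩, hxs⟩ := hxU
      obtain ⟨t, ⟨h0, rfl⟩, hxt⟩ := hxs
      exact Set.mem_iUnion.2 ⟨k, Set.mem_iUnion.2 ⟨h0, hxN, hxt⟩⟩
    refine measure_mono_null this ?_
    exact measure_iUnion_null fun k => measure_iUnion_null fun h0 => h0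
  -- (Icc \ N) ∩ V is null
  have hCV : volume ((Set.Icc a b \ N) ∩ V) = 0 := by
    have : (Set.Icc a b \ N) ∩ V ⊆ ⋃ k,
        ⋃ _ : volume ((Set.Icc a b \ N) ∩ Set.Ioo (c k) (d k)) = 0,
        ((Set.Icc a b \ N) ∩ Set.Ioo (c k) (d k)) := by
      rintro x ⟨hxC, hxV⟩
      obtain ⟨s, ⟨k, rfl⟩, hxs⟩ := hxV
      obtain ⟨t, ⟨h0, rfl⟩, hxt⟩ := hxs
      exact Set.mem_iUnion.2 ⟨k, Set.mem_iUnion.2 ⟨h0, hxC, hxt⟩⟩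
    refine measure_mono_null this ?_
    exact measure_iUnion_null fun k => measure_iUnion_null fun h0 => h0
  -- complement has positive measure
  have hCpos : 0 < volume (Set.Icc a b \ N) := by
    rcases eq_or_ne (volume (Set.Icc a b \ N)) 0 with h0 | h0
    · exfalso
      have : volume (Set.Icc a b) ≤ volume N := by
        calc volume (Set.Icc a b) = volume (N ∪ (Set.Icc a b \ N)) := by
              rw [Set.union_diff_cancel hN_sub]
          _ ≤ volume N + volume (Set.Icc a b \ N) := measure_union_le _ _
          _ = volume N := by rw [h0, add_zero]
      exact absurd this (not_le.2 hN_lt)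
    · exact zero_lt_iff.mpr h0
  -- Icc ∩ V is nonempty: N ∩ V has positive measure
  have hNVpos : volume (N ∩ V) ≠ 0 := by
    intro h0
    have : volume N ≤ volume (N ∩ U) + volume (N ∩ V) := by
      calc volume N = volume ((N ∩ U) ∪ (N ∩ V)) := by
            congr 1
            rw [← Set.inter_union_distrib_left]
            exact (Set.inter_eq_left.2 (hN_sub.trans hsubUV)).symm
        _ ≤ _ := measure_union_le _ _
    rw [hNU, h0, add_zero] at this
    exact absurd (le_antisymm this zero_le) (ne_of_gt hN_pos)
  have hCUpos : volume ((Set.Icc a b \ N) ∩ U) ≠ 0 := by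
    intro h0
    have : volume (Set.Icc a b \ N)
        ≤ volume ((Set.Icc a b \ N) ∩ U) + volume ((Set.Icc a b \ N) ∩ V) := by
      calc volume (Set.Icc a b \ N)
          = volume (((Set.Icc a b \ N) ∩ U) ∪ ((Set.Icc a b \ N) ∩ V)) := by
            congr 1
            rw [← Set.inter_union_distrib_left]
            exact (Set.inter_eq_left.2 ((Set.diff_subset).trans hsubUV)).symm
        _ ≤ _ := measure_union_le _ _
    rw [hCV, h0, add_zero] at this
    exact absurd (le_antisymm this zero_le) (ne_of_gt hCpos)
  -- connectedness
  have hneU : (Set.Icc a b ∩ U).Nonempty := by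
    obtain ⟨x, hx⟩ := nonempty_of_measure_ne_zero hCUpos
    exact ⟨x, hx.1.1, hx.2⟩
  have hneV : (Set.Icc a b ∩ V).Nonempty := by
    obtain ⟨x, hx⟩ := nonempty_of_measure_ne_zero hNVpos
    exact ⟨x, hN_sub hx.1, hx.2⟩
  obtain ⟨x, hxI, hxU, hxV⟩ :=
    (isPreconnected_Icc (a := a) (b := b)) U V hUopen hVopen hsubUV hneU hneV
  obtain ⟨s, ⟨j, rfl⟩, hxs⟩ := hxU
  obtain ⟨t, ⟨hj0, rfl⟩, hxj⟩ := hxs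
  obtain ⟨s, ⟨k, rfl⟩, hxs'⟩ := hxV
  obtain ⟨t, ⟨hk0, rfl⟩, hxk⟩ := hxs'
  -- the common interval J
  set e := max (c j) (c k) with he
  set f := min (d j) (d k) with hf
  have hJsub_j : Set.Ioo e f ⊆ Set.Ioo (c j) (d j) :=
    Set.Ioo_subset_Ioo (le_max_left _ _) (min_le_left _ _)
  have hJsub_k : Set.Ioo e f ⊆ Set.Ioo (c k) (d k) :=
    Set.Ioo_subset_Ioo (le_max_right _ _) (min_le_right _ _)
  -- Icc a b ∩ Ioo e f has positive measure
  have hlt1 : max a e < min b f := by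
    have hax : a ≤ x := hxI.1
    have hxb : x ≤ b := hxI.2
    have hex : e < x := max_lt hxj.1 hxk.1
    have hxf : x < f := lt_min hxj.2 hxk.2
    apply max_lt <;> [skip; skip] <;> apply lt_min
    · exact hab
    · exact lt_of_le_of_lt hax hxf
    · exact lt_of_lt_of_le hex hxb
    · exact lt_of_lt_of_le hex (le_of_lt hxf)
  have hpos : 0 < volume (Set.Icc a b ∩ Set.Ioo e f) := by
    have hsub : Set.Ioo (max a e) (min b f) ⊆ Set.Icc a b ∩ Set.Ioo e f := by
      intro y hy
      constructor
      · exact ⟨le_of_lt (lt_of_le_of_lt (le_max_left _ _) hy.1),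
          le_of_lt (lt_of_lt_of_le hy.2 (min_le_left _ _))⟩
      · exact ⟨lt_of_le_of_lt (le_max_right _ _) hy.1,
          lt_of_lt_of_le hy.2 (min_le_right _ _)⟩
    calc (0 : ENNReal) < volume (Set.Ioo (max a e) (min b f)) := by
          rw [Real.volume_Ioo]
          exact ENNReal.ofReal_pos.2 (by linarith [hlt1])
      _ ≤ _ := measure_mono hsub
  -- but it is null
  have hnull : volume (Set.Icc a b ∩ Set.Ioo e f) = 0 := by
    have hsplit : Set.Icc a b ∩ Set.Ioo e f
        = (N ∩ Set.Ioo e f) ∪ ((Set.Icc a b \ N) ∩ Set.Ioo e f) := by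
      rw [← Set.union_inter_distrib_right, Set.union_diff_cancel hN_sub]
    rw [hsplit]
    refine measure_union_null ?_ ?_
    · exact measure_mono_null (Set.inter_subset_inter_right _ hJsub_j) hj0
    · exact measure_mono_null (Set.inter_subset_inter_right _ hJsub_k) hk0
  exact absurd hnull (ne_of_gt hpos)
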